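/- Let N ≥ 1 and let h_0, h_1, ..., h_N > 0 be positive step sizes. Define the tridiagonal matrix P ∈ ℝ^{N×N} with entries P_{i,i} = -2/(h_{i-1} h_i), subdiagonal entries P_{i+1,i} = 2/(h_i(h_i + h_{i+1})) and superdiagonal entries P_{i,i+1} = 2/(h_i(h_{i-1} + h_i)). Then the spectral norm of P satisfies ‖P‖₂ ≤ max_{i=0,...,N} (4/h_i²). -/

import Mathlib

open Matrix Finset

/-- Spectral (operator 2-) norm of a real square matrix. -/
noncomputable def specNorm {N : ℕ} (A : Matrix (Fin N) (Fin N) ℝ) : ℝ :=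
  ‖Matrix.toEuclideanCLM (𝕜 := ℝ) A‖

/-- The nonuniform second-difference (tridiagonal) matrix on a grid with step sizes `h`. -/
noncomputable def Pmat (N : ℕ) (h : Fin (N + 1) → ℝ) : Matrix (Fin N) (Fin N) ℝ :=
  Matrix.of fun i j =>
    if (i : ℕ) = (j : ℕ) then -2 / (h i.castSucc * h i.succ)
    else if (i : ℕ) + 1 = (j : ℕ) then 2 / (h i.succ * (h i.castSucc + h i.succ))
    else if (j : ℕ) + 1 = (i : ℕ) then 2 / (h i.castSucc * (h i.castSucc + h i.succ))
    else 0

/-- Schur test: row and column absolute sums bound the `ℓ²` operator norm. -/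
lemma schur_bound {N : ℕ} (A : Matrix (Fin N) (Fin N) ℝ) (M : ℝ) (hM : 0 ≤ M)
    (hrow : ∀ i, ∑ j, |A i j| ≤ M) (hcol : ∀ j, ∑ i, |A i j| ≤ M) :
    ‖Matrix.toEuclideanCLM (𝕜 := ℝ) A‖ ≤ M := by
  apply ContinuousLinearMap.opNorm_le_bound _ hM
  intro x
  set y := Matrix.toEuclideanCLM (𝕜 := ℝ) A x with hy
  have happly : ∀ i, y i = ∑ j, A i j * x j := by
    intro i
    have := congrFun (Matrix.ofLp_toEuclideanCLM (n := Fin N) (𝕜 := ℝ) A x) i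
    rw [hy, this]; simp [Matrix.mulVec, dotProduct]
  have hkey : ‖y‖ ^ 2 ≤ (M * ‖x‖) ^ 2 := by
    have hynorm : ‖y‖ ^ 2 = ∑ i, (y i) ^ 2 := by
      rw [EuclideanSpace.norm_eq, Real.sq_sqrt (by positivity)]
      simp [sq_abs]
    have hxnorm : ‖x‖ ^ 2 = ∑ j, (x j) ^ 2 := by
      rw [EuclideanSpace.norm_eq, Real.sq_sqrt (by positivity)]
      simp [sq_abs]
    rw [hynorm, mul_pow, hxnorm]
    have step1 : ∀ i, (y i) ^ 2 ≤ M * ∑ j, |A i j| * (x j) ^ 2 := by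
      intro i
      have habs : |y i| ≤ ∑ j, |A i j| * |x j| := by
        rw [happly i]
        refine (Finset.abs_sum_le_sum_abs _ _).trans ?_
        simp [abs_mul]
      have hCS : (∑ j, |A i j| * |x j|) ^ 2 ≤
          (∑ j, |A i j|) * ∑ j, |A i j| * (x j) ^ 2 := by
        have := Finset.sum_mul_sq_le_sq_mul_sq Finset.univ
          (fun j => Real.sqrt (|A i j|)) (fun j => Real.sqrt (|A i j|) * |x j|)
        have e1 : ∀ j : Fin N, Real.sqrt (|A i j|) * (Real.sqrt (|A i j|) * |x j|)
            = |A i j| * |x j| := by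
          intro j
          rw [← mul_assoc, Real.mul_self_sqrt (abs_nonneg _)]
        have e2 : ∀ j : Fin N, Real.sqrt (|A i j|) ^ 2 = |A i j| := fun j =>
          Real.sq_sqrt (abs_nonneg _)
        have e3 : ∀ j : Fin N, (Real.sqrt (|A i j|) * |x j|) ^ 2 = |A i j| * (x j) ^ 2 := by
          intro j
          rw [mul_pow, Real.sq_sqrt (abs_nonneg _), sq_abs]
        simp only [e1, e2, e3] at this
        exact this
      calc (y i) ^ 2 = |y i| ^ 2 := (sq_abs _).symm
        _ ≤ (∑ j, |A i j| * |x j|) ^ 2 := by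
            apply pow_le_pow_left₀ (abs_nonneg _) habs
        _ ≤ (∑ j, |A i j|) * ∑ j, |A i j| * (x j) ^ 2 := hCS
        _ ≤ M * ∑ j, |A i j| * (x j) ^ 2 := by
            apply mul_le_mul_of_nonneg_right (hrow i)
            positivity
    calc ∑ i, (y i) ^ 2 ≤ ∑ i, M * ∑ j, |A i j| * (x j) ^ 2 :=
          Finset.sum_le_sum fun i _ => step1 i
      _ = M * ∑ j, (∑ i, |A i j|) * (x j) ^ 2 := by
          rw [← Finset.mul_sum, Finset.sum_comm]
          simp_rw [Finset.sum_mul]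
      _ ≤ M * ∑ j, M * (x j) ^ 2 := by
          apply mul_le_mul_of_nonneg_left _ hM
          apply Finset.sum_le_sum
          intro j _
          exact mul_le_mul_of_nonneg_right (hcol j) (sq_nonneg _)
      _ = M * M * ∑ j, (x j) ^ 2 := by rw [← Finset.mul_sum]; ring
      _ = M ^ 2 * ∑ j, (x j) ^ 2 := by ring
  have h1 : (0:ℝ) ≤ ‖y‖ := norm_nonneg _
  have h2 : (0:ℝ) ≤ M * ‖x‖ := by positivity
  nlinarith [hkey, h1, h2]

/-- Summing an indicator supported on at most one point. -/
lemma sum_ite_le {α : Type*} [Fintype α] (c : α → Prop) [DecidablePred c] (v : ℝ)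
    (hv : 0 ≤ v) (hc : ∀ a b, c a → c b → a = b) :
    ∑ a, (if c a then v else 0) ≤ v := by
  rw [← Finset.sum_filter]
  simp only [Finset.sum_const, nsmul_eq_mul]
  have hcard : (Finset.univ.filter c).card ≤ 1 := by
    apply Finset.card_le_one.mpr
    intro a ha b hb
    exact hc a b (Finset.mem_filter.mp ha).2 (Finset.mem_filter.mp hb).2
  calc ((Finset.univ.filter c).card : ℝ) * v ≤ 1 * v := by
        apply mul_le_mul_of_nonneg_right _ hv
        exact_mod_cast hcard
    _ = v := one_mul v

theorem spectral_norm_bound (N : ℕ) (hN : 1 ≤ N) (h : Fin (N + 1) → ℝ)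
    (hpos : ∀ i, 0 < h i) :
    specNorm (Pmat N h) ≤
      Finset.univ.sup' Finset.univ_nonempty (fun i : Fin (N + 1) => 4 / (h i) ^ 2) := by
  set m := Finset.univ.inf' Finset.univ_nonempty h with hm
  have hmle : ∀ i, m ≤ h i := fun i => Finset.inf'_le _ (Finset.mem_univ i)
  have hmpos : 0 < m := by
    obtain ⟨i, _, hi⟩ := Finset.exists_mem_eq_inf' (Finset.univ_nonempty (α := Fin (N+1))) h
    rw [hm, hi]; exact hpos i
  have hMle : 4 / m ^ 2 ≤ Finset.univ.sup' Finset.univ_nonempty (fun i : Fin (N + 1) => 4 / (h i) ^ 2) := by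
    obtain ⟨i, _, hi⟩ := Finset.exists_mem_eq_inf' (Finset.univ_nonempty (α := Fin (N+1))) h
    rw [hm, hi]
    exact Finset.le_sup' (fun i : Fin (N + 1) => 4 / (h i) ^ 2) (Finset.mem_univ i)
  refine le_trans ?_ hMle
  -- pointwise bound on entries
  have hb : ∀ i j : Fin N, |Pmat N h i j| ≤
      (if (i : ℕ) = (j : ℕ) then 2 / m ^ 2 else 0)
      + (if (i : ℕ) + 1 = (j : ℕ) then 1 / m ^ 2 else 0)
      + (if (j : ℕ) + 1 = (i : ℕ) then 1 / m ^ 2 else 0) := by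
    intro i j
    have h1 : 0 < h i.castSucc := hpos _
    have h2 : 0 < h i.succ := hpos _
    have hm1 : m ≤ h i.castSucc := hmle _
    have hm2 : m ≤ h i.succ := hmle _
    simp only [Pmat, Matrix.of_apply]
    by_cases e1 : (i : ℕ) = (j : ℕ)
    · have e2 : ¬ ((i : ℕ) + 1 = (j : ℕ)) := by omega
      have e3 : ¬ ((j : ℕ) + 1 = (i : ℕ)) := by omega
      simp only [if_pos e1, if_neg e2, if_neg e3]
      rw [neg_div, abs_neg, abs_of_nonneg (by positivity)]
      have hd : m ^ 2 ≤ h i.castSucc * h i.succ := by nlinarith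
      have := div_le_div_of_nonneg_left (by norm_num : (0:ℝ) ≤ 2)
        (by positivity : (0:ℝ) < m ^ 2) hd
      linarith
    · simp only [if_neg e1]
      by_cases e2 : (i : ℕ) + 1 = (j : ℕ)
      · have e3 : ¬ ((j : ℕ) + 1 = (i : ℕ)) := by omega
        simp only [if_pos e2, if_neg e3]
        rw [abs_of_nonneg (by positivity)]
        have hd : 2 * m ^ 2 ≤ h i.succ * (h i.castSucc + h i.succ) := by nlinarith
        have h5 := div_le_div_of_nonneg_left (by norm_num : (0:ℝ) ≤ 2)
          (by positivity : (0:ℝ) < 2 * m ^ 2) hd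
        have e4 : (2:ℝ) / (2 * m ^ 2) = 1 / m ^ 2 := by
          field_simp
        rw [e4] at h5
        linarith
      · simp only [if_neg e2]
        by_cases e3 : (j : ℕ) + 1 = (i : ℕ)
        · simp only [if_pos e3]
          rw [abs_of_nonneg (by positivity)]
          have hd : 2 * m ^ 2 ≤ h i.castSucc * (h i.castSucc + h i.succ) := by nlinarith
          have h5 := div_le_div_of_nonneg_left (by norm_num : (0:ℝ) ≤ 2)
            (by positivity : (0:ℝ) < 2 * m ^ 2) hd
          have e4 : (2:ℝ) / (2 * m ^ 2) = 1 / m ^ 2 := by field_simp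
          rw [e4] at h5
          linarith
        · simp only [if_neg e3]
          simp
  apply schur_bound
  · positivity
  · -- row sums
    intro i
    calc ∑ j, |Pmat N h i j|
        ≤ ∑ j : Fin N, ((if (i : ℕ) = (j : ℕ) then 2 / m ^ 2 else 0)
          + (if (i : ℕ) + 1 = (j : ℕ) then 1 / m ^ 2 else 0)
          + (if (j : ℕ) + 1 = (i : ℕ) then 1 / m ^ 2 else 0)) :=
          Finset.sum_le_sum fun j _ => hb i j
      _ = (∑ j : Fin N, if (i : ℕ) = (j : ℕ) then 2 / m ^ 2 else 0)
          + (∑ j : Fin N, if (i : ℕ) + 1 = (j : ℕ) then 1 / m ^ 2 else 0)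
          + (∑ j : Fin N, if (j : ℕ) + 1 = (i : ℕ) then 1 / m ^ 2 else 0) := by
          rw [Finset.sum_add_distrib, Finset.sum_add_distrib]
      _ ≤ 2 / m ^ 2 + 1 / m ^ 2 + 1 / m ^ 2 := by
          gcongr
          · exact sum_ite_le _ _ (by positivity) fun a b ha hb => by
              apply Fin.ext; omega
          · exact sum_ite_le _ _ (by positivity) fun a b ha hb => by
              apply Fin.ext; omega
          · exact sum_ite_le _ _ (by positivity) fun a b ha hb => by
              apply Fin.ext; omega
      _ = 4 / m ^ 2 := by ring
  · -- column sums
    intro j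
    calc ∑ i, |Pmat N h i j|
        ≤ ∑ i : Fin N, ((if (i : ℕ) = (j : ℕ) then 2 / m ^ 2 else 0)
          + (if (i : ℕ) + 1 = (j : ℕ) then 1 / m ^ 2 else 0)
          + (if (j : ℕ) + 1 = (i : ℕ) then 1 / m ^ 2 else 0)) :=
          Finset.sum_le_sum fun i _ => hb i j
      _ = (∑ i : Fin N, if (i : ℕ) = (j : ℕ) then 2 / m ^ 2 else 0)
          + (∑ i : Fin N, if (i : ℕ) + 1 = (j : ℕ) then 1 / m ^ 2 else 0)
          + (∑ i : Fin N, if (j : ℕ) + 1 = (i : ℕ) then 1 / m ^ 2 else 0) := by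
          rw [Finset.sum_add_distrib, Finset.sum_add_distrib]
      _ ≤ 2 / m ^ 2 + 1 / m ^ 2 + 1 / m ^ 2 := by
          gcongr
          · exact sum_ite_le _ _ (by positivity) fun a b ha hb => by
              apply Fin.ext; omega
          · exact sum_ite_le _ _ (by positivity) fun a b ha hb => by
              apply Fin.ext; omega
          · exact sum_ite_le _ _ (by positivity) fun a b ha hb => by
              apply Fin.ext; omega
      _ = 4 / m ^ 2 := by ring
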